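/- Let n ≥ 1 and ℓ ≥ 1 be integers and let p be a real number with 0 < p ≤ 1/2; set q := 1 − p and α := p/q. Then μ_p(ddot{F}^ℓ) ≤ α^{ℓ+1}. -/

import Mathlib

open Finset

open scoped Classical

noncomputable section

/-- The `p`-weight of a family of subsets of `[n] = {1,…,n}`. -/
def mu (n : ℕ) (p : ℝ) (𝓕 : Finset (Finset ℕ)) : ℝ :=
  ∑ F ∈ 𝓕, p ^ F.card * (1 - p) ^ (n - F.card)

/-- Two families are cross `t`-intersecting. -/
def CrossIntersecting (t : ℕ) (𝓐 𝓑 : Finset (Finset ℕ)) : Prop :=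
  ∀ A ∈ 𝓐, ∀ B ∈ 𝓑, t ≤ (A ∩ B).card

/-- The Frankl family `F_i^ℓ = {F ⊆ [n] : |F ∩ [ℓ+2i]| ≥ ℓ+i}`. -/
def FF (n ℓ i : ℕ) : Finset (Finset ℕ) :=
  (Finset.Icc 1 n).powerset.filter fun F => ℓ + i ≤ (F ∩ Finset.Icc 1 (ℓ + 2 * i)).card

/-- `F` reaches level `ℓ`: there is `0 ≤ j ≤ n` with `2|F ∩ [j]| ≥ j + ℓ`. -/
def Reaches (n ℓ : ℕ) (F : Finset ℕ) : Prop :=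
  ∃ j ≤ n, j + ℓ ≤ 2 * (F ∩ Finset.Icc 1 j).card

/-- The number of steps `0 ≤ j ≤ n` at which `F` hits level `ℓ`, i.e. `2|F ∩ [j]| = j + ℓ`. -/
def hitCount (n ℓ : ℕ) (F : Finset ℕ) : ℕ :=
  ((Finset.range (n + 1)).filter fun j => 2 * (F ∩ Finset.Icc 1 j).card = j + ℓ).card

/-- `F^ℓ`: all subsets of `[n]` reaching level `ℓ`. -/
def Fwalk (n ℓ : ℕ) : Finset (Finset ℕ) :=
  (Finset.Icc 1 n).powerset.filter fun F => Reaches n ℓ F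

/-- `tilde F^ℓ`: all subsets of `[n]` reaching level `ℓ+1`. -/
def Ftilde (n ℓ : ℕ) : Finset (Finset ℕ) :=
  (Finset.Icc 1 n).powerset.filter fun F => Reaches n (ℓ + 1) F

/-- `hat F^ℓ`: subsets not reaching level `ℓ+1` and hitting level `ℓ` exactly once. -/
def Fhat (n ℓ : ℕ) : Finset (Finset ℕ) :=
  (Finset.Icc 1 n).powerset.filter fun F => ¬ Reaches n (ℓ + 1) F ∧ hitCount n ℓ F = 1

/-- `ddot F^ℓ`: subsets not reaching level `ℓ+1` and hitting level `ℓ` at least twice. -/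
def Fddot (n ℓ : ℕ) : Finset (Finset ℕ) :=
  (Finset.Icc 1 n).powerset.filter fun F => ¬ Reaches n (ℓ + 1) F ∧ 2 ≤ hitCount n ℓ F

/-- The `(i,j)`-shift of a single set `F`, relative to the family `𝓕`. -/
def shiftSet (i j : ℕ) (𝓕 : Finset (Finset ℕ)) (F : Finset ℕ) : Finset ℕ :=
  if j ∈ F ∧ i ∉ F ∧ insert i (F.erase j) ∉ 𝓕 then insert i (F.erase j) else F

/-- The `(i,j)`-shift `s_{ij}(𝓕)` of a family `𝓕`. -/
def shiftFam (i j : ℕ) (𝓕 : Finset (Finset ℕ)) : Finset (Finset ℕ) :=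
  𝓕.image (shiftSet i j 𝓕)

/-- A family is shifted if all shifts `s_{ij}`, `1 ≤ i < j ≤ n`, fix it. -/
def Shifted (n : ℕ) (𝓕 : Finset (Finset ℕ)) : Prop :=
  ∀ i j : ℕ, 1 ≤ i → i < j → j ≤ n → shiftFam i j 𝓕 = 𝓕

/-- A family of subsets of `[n]` is inclusion maximal. -/
def InclMax (n : ℕ) (𝓕 : Finset (Finset ℕ)) : Prop :=
  ∀ F ∈ 𝓕, ∀ F' : Finset ℕ, F ⊆ F' → F' ⊆ Finset.Icc 1 n → F' ∈ 𝓕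

/-- `λ(𝓕)`: the largest `λ ≥ 0` such that every member of `𝓕` reaches level `λ`. -/
def lam (n : ℕ) (𝓕 : Finset (Finset ℕ)) : ℕ :=
  Nat.findGreatest (fun ℓ => ∀ F ∈ 𝓕, Reaches n ℓ F) n

/-- Two families of subsets of `[n]` are isomorphic via a permutation of `[n]`. -/
def Isom (n : ℕ) (𝓖₁ 𝓖₂ : Finset (Finset ℕ)) : Prop :=
  ∃ σ : Equiv.Perm ℕ, (∀ k ∈ Finset.Icc 1 n, σ k ∈ Finset.Icc 1 n) ∧
    𝓖₁ = 𝓖₂.image fun G => G.image σ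

/-- The quantity `f(ℓ, i, p)` from Ahlswede–Khachatrian type estimates. -/
def fLP (ℓ i : ℕ) (p : ℝ) : ℝ :=
  (p / (1 - p)) ^ (ℓ + 1) +
    (Nat.choose (ℓ + 2 * i) i : ℝ) * ((ℓ + 1 : ℝ) / (ℓ + i + 1)) * p ^ (ℓ + i) *
      (1 - p) ^ i * (1 - p / (1 - p))

/-- The walk `D_s^t(i) = [t−1] ∪ {t+s,…,t+2s} ∪ {t+2s+i+2k : k ≥ 1} ∩ [n]`. -/
def DD (n t s i : ℕ) : Finset ℕ :=
  Finset.Icc 1 (t - 1) ∪ Finset.Icc (t + s) (t + 2 * s) ∪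
    ((Finset.Icc 1 n).filter fun m => ∃ k ∈ Finset.Icc 1 n, m = t + 2 * s + i + 2 * k)

end

noncomputable section Aux

variable {p : ℝ}

lemma mu_nonneg (hp0 : 0 ≤ p) (hp1 : p ≤ 1) (n : ℕ) (𝓕 : Finset (Finset ℕ)) :
    0 ≤ mu n p 𝓕 := by
  refine Finset.sum_nonneg fun F _ => ?_
  have : (0:ℝ) ≤ 1 - p := by linarith
  positivity

lemma mu_mono (hp0 : 0 ≤ p) (hp1 : p ≤ 1) (n : ℕ) {𝓐 𝓑 : Finset (Finset ℕ)}
    (h : 𝓐 ⊆ 𝓑) : mu n p 𝓐 ≤ mu n p 𝓑 := by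
  refine Finset.sum_le_sum_of_subset_of_nonneg h fun F _ _ => ?_
  have : (0:ℝ) ≤ 1 - p := by linarith
  positivity

lemma mu_powerset (n : ℕ) : mu n p ((Finset.Icc 1 n).powerset) = 1 := by
  have h := Finset.prod_add (fun _ : ℕ => p) (fun _ : ℕ => 1 - p) (Finset.Icc 1 n)
  have h2 : ∀ t ∈ (Finset.Icc 1 n).powerset,
      (∏ _i ∈ t, p) * ∏ _i ∈ Finset.Icc 1 n \ t, (1 - p)
        = p ^ t.card * (1 - p) ^ (n - t.card) := by
    intro t ht
    rw [Finset.prod_const, Finset.prod_const, Finset.card_sdiff_of_subset (Finset.mem_powerset.mp ht),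
      Nat.card_Icc]
    simp
  rw [mu, ← Finset.sum_congr rfl h2, ← h]
  simp

lemma insert_inter_card {a : ℕ} {F I : Finset ℕ} (ha : a ∉ F) :
    (insert a F ∩ I).card = (F ∩ I).card + (if a ∈ I then 1 else 0) := by
  by_cases h : a ∈ I
  · have : insert a F ∩ I = insert a (F ∩ I) := by
      ext x; simp only [Finset.mem_inter, Finset.mem_insert]
      constructor
      · rintro ⟨x1 | x1, x2⟩
        · exact Or.inl x1
        · exact Or.inr ⟨x1, x2⟩
      · rintro (rfl | ⟨x1, x2⟩)
        · exact ⟨Or.inl rfl, h⟩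
        · exact ⟨Or.inr x1, x2⟩
    rw [this, Finset.card_insert_of_notMem (fun hx => ha (Finset.mem_inter.mp hx).1)]
    simp [h]
  · have : insert a F ∩ I = F ∩ I := by
      ext x; simp only [Finset.mem_inter, Finset.mem_insert]
      constructor
      · rintro ⟨rfl | x1, x2⟩
        · exact absurd x2 h
        · exact ⟨x1, x2⟩
      · rintro ⟨x1, x2⟩; exact ⟨Or.inr x1, x2⟩
    rw [this]; simp [h]

lemma card_inter_succ (F : Finset ℕ) (j : ℕ) :
    (F ∩ Finset.Icc 1 (j+1)).card
      = (F ∩ Finset.Icc 1 j).card + (if j+1 ∈ F then 1 else 0) := by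
  have hIcc : Finset.Icc 1 (j+1) = insert (j+1) (Finset.Icc 1 j) :=
    (Finset.insert_Icc_right_eq_Icc_add_one (by omega)).symm
  by_cases h : j + 1 ∈ F
  · have : F ∩ Finset.Icc 1 (j+1) = insert (j+1) (F ∩ Finset.Icc 1 j) := by
      rw [hIcc]; ext x
      simp only [Finset.mem_inter, Finset.mem_insert, Finset.mem_Icc]
      constructor
      · rintro ⟨x1, rfl | x2⟩
        · exact Or.inl rfl
        · exact Or.inr ⟨x1, x2⟩
      · rintro (rfl | ⟨x1, x2⟩)
        · exact ⟨h, Or.inl rfl⟩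
        · exact ⟨x1, Or.inr x2⟩
    rw [this, Finset.card_insert_of_notMem (by simp [Finset.mem_Icc])]
    simp [h]
  · have : F ∩ Finset.Icc 1 (j+1) = F ∩ Finset.Icc 1 j := by
      rw [hIcc]; ext x
      simp only [Finset.mem_inter, Finset.mem_insert, Finset.mem_Icc]
      constructor
      · rintro ⟨x1, rfl | x2⟩
        · exact absurd x1 h
        · exact ⟨x1, x2⟩
      · rintro ⟨x1, x2⟩; exact ⟨x1, Or.inr x2⟩
    rw [this]; simp [h]

/-- shift a finset up by one -/
def up (S : Finset ℕ) : Finset ℕ := S.image (· + 1)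

lemma up_injective : Function.Injective up :=
  Finset.image_injective (add_left_injective 1)

lemma one_not_mem_up {S : Finset ℕ} (h0 : 0 ∉ S) : 1 ∉ up S := by
  simp only [up, Finset.mem_image]
  rintro ⟨s, hs, hs1⟩
  have : s = 0 := by omega
  exact h0 (this ▸ hs)


lemma up_card (S : Finset ℕ) : (up S).card = S.card :=
  Finset.card_image_of_injective _ (add_left_injective 1)

lemma up_subset {S : Finset ℕ} {n : ℕ} (hS : S ⊆ Finset.Icc 1 n) :
    up S ⊆ Finset.Icc 1 (n+1) := by
  intro x hx
  simp only [up, Finset.mem_image] at hx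
  obtain ⟨s, hs, rfl⟩ := hx
  have := Finset.mem_Icc.mp (hS hs)
  simp [Finset.mem_Icc]; omega

lemma up_inter_card {S : Finset ℕ} (h0 : 0 ∉ S) (j : ℕ) :
    (up S ∩ Finset.Icc 1 (j+1)).card = (S ∩ Finset.Icc 1 j).card := by
  have : up S ∩ Finset.Icc 1 (j+1) = up (S ∩ Finset.Icc 1 j) := by
    ext x
    simp only [up, Finset.mem_inter, Finset.mem_image, Finset.mem_Icc]
    constructor
    · rintro ⟨⟨s, hs, rfl⟩, h1, h2⟩
      have : s ≠ 0 := fun h => h0 (h ▸ hs)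
      exact ⟨s, ⟨hs, by omega, by omega⟩, rfl⟩
    · rintro ⟨s, ⟨hs, h1, h2⟩, rfl⟩
      exact ⟨⟨s, hs, rfl⟩, by omega, by omega⟩
  rw [this, up_card]

lemma inter_Icc_zero (F : Finset ℕ) : F ∩ Finset.Icc 1 0 = ∅ := by
  simp

lemma reaches_up {S : Finset ℕ} (h0 : 0 ∉ S) {n m : ℕ} :
    Reaches (n+1) (m+1) (up S) ↔ Reaches n (m+2) S := by
  constructor
  · rintro ⟨j, hj, h⟩
    match j with
    | 0 => simp [inter_Icc_zero] at h
    | j+1 =>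
      rw [up_inter_card h0] at h
      exact ⟨j, by omega, by omega⟩
  · rintro ⟨j, hj, h⟩
    exact ⟨j+1, by omega, by rw [up_inter_card h0]; omega⟩

lemma insert_up_inter_card {S : Finset ℕ} (h0 : 0 ∉ S) (j : ℕ) :
    (insert 1 (up S) ∩ Finset.Icc 1 (j+1)).card = (S ∩ Finset.Icc 1 j).card + 1 := by
  rw [insert_inter_card (one_not_mem_up h0), up_inter_card h0]
  simp [Finset.mem_Icc]

lemma reaches_insert_up {S : Finset ℕ} (h0 : 0 ∉ S) {n m : ℕ} :
    Reaches (n+1) (m+1) (insert 1 (up S)) ↔ Reaches n m S := by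
  constructor
  · rintro ⟨j, hj, h⟩
    match j with
    | 0 => simp [inter_Icc_zero] at h
    | j+1 =>
      rw [insert_up_inter_card h0] at h
      exact ⟨j, by omega, by omega⟩
  · rintro ⟨j, hj, h⟩
    exact ⟨j+1, by omega, by rw [insert_up_inter_card h0]; omega⟩

lemma zero_not_mem {S : Finset ℕ} {n : ℕ} (hS : S ⊆ Finset.Icc 1 n) : 0 ∉ S := by
  intro h; have := Finset.mem_Icc.mp (hS h); omega

lemma fwalk_succ (n m : ℕ) :
    Fwalk (n+1) (m+1) =
      ((Fwalk n m).image fun S => insert 1 (up S)) ∪ ((Fwalk n (m+2)).image up) := by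
  ext G
  simp only [Fwalk, Finset.mem_filter, Finset.mem_powerset, Finset.mem_union, Finset.mem_image]
  constructor
  · rintro ⟨hG, hR⟩
    by_cases h1 : 1 ∈ G
    · left
      set S := (G.erase 1).image (· - 1) with hSdef
      have hup : up S = G.erase 1 := by
        rw [hSdef, up, Finset.image_image]
        have heq : ∀ x ∈ G.erase 1, ((· + 1) ∘ (· - 1)) x = id x := by
          intro x hx
          have hx1 := Finset.mem_erase.mp hx
          have := Finset.mem_Icc.mp (hG hx1.2)
          simp only [Function.comp, id]
          omega
        rw [Finset.image_congr fun x hx => heq x (by simpa [and_comm] using hx), Finset.image_id]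
      have hG' : G = insert 1 (up S) := by
        rw [hup, Finset.insert_erase h1]
      have hS : S ⊆ Finset.Icc 1 n := by
        intro x hx
        rw [hSdef] at hx
        simp only [Finset.mem_image, Finset.mem_erase] at hx
        obtain ⟨g, ⟨hg1, hg2⟩, rfl⟩ := hx
        have := Finset.mem_Icc.mp (hG hg2)
        simp only [Finset.mem_Icc]
        omega
      refine ⟨S, ⟨⟨hS, ?_⟩, hG'.symm⟩⟩
      exact (reaches_insert_up (zero_not_mem hS)).mp (hG' ▸ hR)
    · right
      set S := G.image (· - 1) with hSdef
      have hup : up S = G := by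
        rw [hSdef, up, Finset.image_image]
        have heq : ∀ x ∈ G, ((· + 1) ∘ (· - 1)) x = id x := by
          intro x hx
          have := Finset.mem_Icc.mp (hG hx)
          have : x ≠ 1 := fun h => h1 (h ▸ hx)
          simp only [Function.comp, id]
          omega
        rw [Finset.image_congr fun x hx => heq x (by simpa using hx), Finset.image_id]
      have hS : S ⊆ Finset.Icc 1 n := by
        intro x hx
        rw [hSdef] at hx
        simp only [Finset.mem_image] at hx
        obtain ⟨g, hg, rfl⟩ := hx
        have := Finset.mem_Icc.mp (hG hg)
        have : g ≠ 1 := fun h => h1 (h ▸ hg)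
        simp only [Finset.mem_Icc]
        omega
      refine ⟨S, ⟨⟨hS, ?_⟩, hup⟩⟩
      exact (reaches_up (zero_not_mem hS)).mp (hup.symm ▸ hR)
  · rintro (⟨S, ⟨⟨hS, hR⟩, rfl⟩⟩ | ⟨S, ⟨⟨hS, hR⟩, rfl⟩⟩)
    · have h0 := zero_not_mem hS
      refine ⟨?_, (reaches_insert_up h0).mpr hR⟩
      intro x hx
      rcases Finset.mem_insert.mp hx with rfl | hx
      · simp only [Finset.mem_Icc]; omega
      · exact up_subset hS hx
    · exact ⟨up_subset hS, (reaches_up (zero_not_mem hS)).mpr hR⟩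

lemma mu_fwalk_succ (n m : ℕ) :
    mu (n+1) p (Fwalk (n+1) (m+1))
      = p * mu n p (Fwalk n m) + (1 - p) * mu n p (Fwalk n (m+2)) := by
  have hsub1 : ∀ S ∈ Fwalk n m, S ⊆ Finset.Icc 1 n := fun S hS =>
    Finset.mem_powerset.mp (Finset.mem_filter.mp hS).1
  have hsub2 : ∀ S ∈ Fwalk n (m+2), S ⊆ Finset.Icc 1 n := fun S hS =>
    Finset.mem_powerset.mp (Finset.mem_filter.mp hS).1
  have hdisj : Disjoint ((Fwalk n m).image fun S => insert 1 (up S))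
      ((Fwalk n (m+2)).image up) := by
    rw [Finset.disjoint_left]
    rintro G hG1 hG2
    simp only [Finset.mem_image] at hG1 hG2
    obtain ⟨S, hS, rfl⟩ := hG1
    obtain ⟨S', hS', hEq⟩ := hG2
    have : 1 ∈ up S' := hEq ▸ Finset.mem_insert_self 1 (up S)
    exact one_not_mem_up (zero_not_mem (hsub2 S' hS')) this
  rw [fwalk_succ, mu, Finset.sum_union hdisj]
  congr 1
  · rw [Finset.sum_image ?inj]
    case inj =>
      intro S hS S' hS' hEq
      have h2 := congrArg (fun t : Finset ℕ => t.erase 1) hEq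
      simp only at h2
      rw [Finset.erase_insert (one_not_mem_up (zero_not_mem (hsub1 S hS))),
        Finset.erase_insert (one_not_mem_up (zero_not_mem (hsub1 S' hS')))] at h2
      exact up_injective h2
    rw [mu, Finset.mul_sum]
    refine Finset.sum_congr rfl fun S hS => ?_
    have h0 := zero_not_mem (hsub1 S hS)
    rw [Finset.card_insert_of_notMem (one_not_mem_up h0), up_card,
      Nat.succ_sub_succ, pow_succ]
    ring
  · rw [Finset.sum_image (fun S _ S' _ h => up_injective h), mu, Finset.mul_sum]
    refine Finset.sum_congr rfl fun S hS => ?_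
    have hc : S.card ≤ n := by
      have := Finset.card_le_card (hsub2 S hS)
      simpa [Nat.card_Icc] using this
    rw [up_card, Nat.succ_sub hc, pow_succ]
    ring

lemma mu_fwalk_le (hp : 0 < p) (hp' : p ≤ 1/2) (n : ℕ) :
    ∀ m, mu n p (Fwalk n m) ≤ (p / (1 - p)) ^ m := by
  have hq : 0 < 1 - p := by linarith
  have hp1 : p ≤ 1 := by linarith
  have hα : 0 < p / (1 - p) := div_pos hp hq
  induction n with
  | zero =>
    intro m
    match m with
    | 0 =>
      calc mu 0 p (Fwalk 0 0) ≤ mu 0 p ((Finset.Icc 1 0).powerset) :=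
            mu_mono hp.le hp1 0 (Finset.filter_subset _ _)
        _ = 1 := mu_powerset 0
        _ = _ := by simp
    | m+1 =>
      have hemp : Fwalk 0 (m+1) = ∅ := by
        apply Finset.eq_empty_of_forall_notMem
        intro F hF
        obtain ⟨_, j, hj, h⟩ := Finset.mem_filter.mp hF
        have : j = 0 := Nat.le_zero.mp hj
        subst this
        simp [inter_Icc_zero] at h
      rw [hemp]
      have : mu 0 p (∅ : Finset (Finset ℕ)) = 0 := by simp [mu]
      rw [this]
      positivity
  | succ n ih =>
    intro m
    match m with
    | 0 =>
      calc mu (n+1) p (Fwalk (n+1) 0) ≤ mu (n+1) p ((Finset.Icc 1 (n+1)).powerset) :=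
            mu_mono hp.le hp1 _ (Finset.filter_subset _ _)
        _ = 1 := mu_powerset _
        _ = _ := by simp
    | m+1 =>
      rw [mu_fwalk_succ]
      have key : p * (p/(1-p))^m + (1-p) * (p/(1-p))^(m+2) = (p/(1-p))^(m+1) := by
        have h1 : (1-p) * (p/(1-p)) = p := by field_simp
        linear_combination ((p/(1-p))^(m+1) - (p/(1-p))^m) * h1
      calc p * mu n p (Fwalk n m) + (1-p) * mu n p (Fwalk n (m+2))
          ≤ p * (p/(1-p))^m + (1-p) * (p/(1-p))^(m+2) := by
            have h1 := ih m
            have h2 := ih (m+2)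
            have := mu_nonneg hp.le hp1 n (Fwalk n m)
            nlinarith [mu_nonneg hp.le hp1 n (Fwalk n (m+2))]
        _ = _ := key

/-- first hitting step of level `ℓ` -/
def hitJ (n ℓ : ℕ) (F : Finset ℕ) : ℕ :=
  sInf {j | j ≤ n ∧ 2 * (F ∩ Finset.Icc 1 j).card = j + ℓ}

def phi (n ℓ : ℕ) (F : Finset ℕ) : Finset ℕ := insert (hitJ n ℓ F + 1) F

lemma fddot_base {n ℓ : ℕ} {F : Finset ℕ} (hF : F ∈ Fddot n ℓ) :
    F ⊆ Finset.Icc 1 n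
    ∧ (∀ j, j ≤ n → 2 * (F ∩ Finset.Icc 1 j).card ≤ j + ℓ)
    ∧ (hitJ n ℓ F ≤ n ∧ 2 * (F ∩ Finset.Icc 1 (hitJ n ℓ F)).card = hitJ n ℓ F + ℓ)
    ∧ (∃ j2 ≤ n, hitJ n ℓ F < j2 ∧ 2 * (F ∩ Finset.Icc 1 j2).card = j2 + ℓ) := by
  obtain ⟨hpow, hnr, hcnt⟩ := Finset.mem_filter.mp hF
  have hsub := Finset.mem_powerset.mp hpow
  have hbound : ∀ j, j ≤ n → 2 * (F ∩ Finset.Icc 1 j).card ≤ j + ℓ := by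
    intro j hj
    by_contra h
    exact hnr ⟨j, hj, by omega⟩
  obtain ⟨a, ha, b, hb, hab⟩ := Finset.one_lt_card.mp hcnt
  simp only [hitCount, Finset.mem_filter, Finset.mem_range] at ha hb
  have haT : a ∈ {j | j ≤ n ∧ 2 * (F ∩ Finset.Icc 1 j).card = j + ℓ} := ⟨by omega, ha.2⟩
  have hbT : b ∈ {j | j ≤ n ∧ 2 * (F ∩ Finset.Icc 1 j).card = j + ℓ} := ⟨by omega, hb.2⟩
  have hmem : hitJ n ℓ F ∈ {j | j ≤ n ∧ 2 * (F ∩ Finset.Icc 1 j).card = j + ℓ} :=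
    Nat.sInf_mem ⟨a, haT⟩
  have hj2 : ∃ j2 ≤ n, hitJ n ℓ F < j2 ∧ 2 * (F ∩ Finset.Icc 1 j2).card = j2 + ℓ := by
    have hla : hitJ n ℓ F ≤ a := Nat.sInf_le haT
    have hlb : hitJ n ℓ F ≤ b := Nat.sInf_le hbT
    rcases eq_or_ne a (hitJ n ℓ F) with heq | hne
    · exact ⟨b, hbT.1, by omega, hbT.2⟩
    · exact ⟨a, haT.1, by omega, haT.2⟩
  exact ⟨hsub, hbound, ⟨hmem.1, hmem.2⟩, hj2⟩

lemma fddot_step {n ℓ : ℕ} {F : Finset ℕ} (hF : F ∈ Fddot n ℓ) :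
    hitJ n ℓ F + 1 ≤ n ∧ hitJ n ℓ F + 1 ∉ F := by
  obtain ⟨hsub, hbound, ⟨hjn, hhit⟩, j2, hj2n, hlt, hhit2⟩ := fddot_base hF
  have h1n : hitJ n ℓ F + 1 ≤ n := by omega
  refine ⟨h1n, fun hmem => ?_⟩
  have hcs := card_inter_succ F (hitJ n ℓ F)
  rw [if_pos hmem] at hcs
  have hb := hbound (hitJ n ℓ F + 1) h1n
  omega

lemma phi_card_inter {n ℓ : ℕ} {F : Finset ℕ} (hF : F ∈ Fddot n ℓ) (j : ℕ) :
    ((phi n ℓ F) ∩ Finset.Icc 1 j).card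
      = (F ∩ Finset.Icc 1 j).card + (if hitJ n ℓ F + 1 ≤ j then 1 else 0) := by
  rw [phi, insert_inter_card (fddot_step hF).2]
  by_cases h : hitJ n ℓ F + 1 ≤ j
  · rw [if_pos (Finset.mem_Icc.mpr ⟨by omega, h⟩), if_pos h]
  · rw [if_neg (fun hc => h (Finset.mem_Icc.mp hc).2), if_neg h]

lemma phi_mem_fwalk {n ℓ : ℕ} {F : Finset ℕ} (hF : F ∈ Fddot n ℓ) :
    phi n ℓ F ∈ Fwalk n (ℓ+2) := by
  obtain ⟨hsub, hbound, ⟨hjn, hhit⟩, j2, hj2n, hlt, hhit2⟩ := fddot_base hF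
  have hstep := fddot_step hF
  refine Finset.mem_filter.mpr ⟨Finset.mem_powerset.mpr ?_, ?_⟩
  · intro x hx
    simp only [phi] at hx
    rcases Finset.mem_insert.mp hx with rfl | hx
    · exact Finset.mem_Icc.mpr ⟨by omega, hstep.1⟩
    · exact hsub hx
  · refine ⟨j2, hj2n, ?_⟩
    rw [phi_card_inter hF, if_pos (by omega)]
    omega

lemma phi_recover {n ℓ : ℕ} {F : Finset ℕ} (hF : F ∈ Fddot n ℓ) :
    sInf {j | j ≤ n ∧ j + (ℓ+1) ≤ 2 * ((phi n ℓ F) ∩ Finset.Icc 1 j).card}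
      = hitJ n ℓ F + 1 := by
  obtain ⟨hsub, hbound, ⟨hjn, hhit⟩, -⟩ := fddot_base hF
  obtain ⟨h1n, hnm⟩ := fddot_step hF
  have hcsucc := card_inter_succ F (hitJ n ℓ F)
  rw [if_neg hnm] at hcsucc
  have hmemT : hitJ n ℓ F + 1 ∈
      {j | j ≤ n ∧ j + (ℓ+1) ≤ 2 * ((phi n ℓ F) ∩ Finset.Icc 1 j).card} := by
    refine ⟨h1n, ?_⟩
    rw [phi_card_inter hF, if_pos le_rfl]
    omega
  have hlow : ∀ j, j ≤ hitJ n ℓ F →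
      j ∉ {j | j ≤ n ∧ j + (ℓ+1) ≤ 2 * ((phi n ℓ F) ∩ Finset.Icc 1 j).card} := by
    rintro j hj ⟨hjn', hge⟩
    rw [phi_card_inter hF, if_neg (by omega)] at hge
    have := hbound j hjn'
    omega
  have h1 := Nat.sInf_le hmemT
  have h2 := Nat.sInf_mem ⟨_, hmemT⟩
  by_contra hne
  exact hlow _ (by omega) h2

lemma phi_card {n ℓ : ℕ} {F : Finset ℕ} (hF : F ∈ Fddot n ℓ) :
    (phi n ℓ F).card = F.card + 1 :=
  Finset.card_insert_of_notMem (fddot_step hF).2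

lemma fddot_card_lt {n ℓ : ℕ} {F : Finset ℕ} (hF : F ∈ Fddot n ℓ) : F.card < n := by
  obtain ⟨hsub, -⟩ := fddot_base hF
  have hss : F ⊂ Finset.Icc 1 n := by
    refine ⟨hsub, fun hsup => (fddot_step hF).2 ?_⟩
    exact hsup (Finset.mem_Icc.mpr ⟨by omega, (fddot_step hF).1⟩)
  have := Finset.card_lt_card hss
  simpa [Nat.card_Icc] using this

end Aux


set_option maxHeartbeats 1000000 in
/-- `μ_p(ddot F^ℓ) ≤ α^{ℓ+1}`. -/
theorem statement_3 (n ℓ : ℕ) (hn : 1 ≤ n) (hl : 1 ≤ ℓ) (p : ℝ)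
    (hp : 0 < p) (hp' : p ≤ 1 / 2) :
    mu n p (Fddot n ℓ) ≤ (p / (1 - p)) ^ (ℓ + 1) := by
  have hq : 0 < 1 - p := by linarith
  have hp1 : p ≤ 1 := by linarith
  have hα0 : 0 < p / (1 - p) := div_pos hp hq
  have hinj : ∀ F ∈ Fddot n ℓ, ∀ F' ∈ Fddot n ℓ, phi n ℓ F = phi n ℓ F' → F = F' := by
    intro F hF F' hF' hEq
    have e1 := phi_recover hF
    have e2 := phi_recover hF'
    rw [hEq] at e1
    have h1 : hitJ n ℓ F = hitJ n ℓ F' := by omega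
    have h3 : F = (phi n ℓ F).erase (hitJ n ℓ F + 1) := by
      rw [phi, Finset.erase_insert (fddot_step hF).2]
    rw [h3, hEq, h1, phi, Finset.erase_insert (fddot_step hF').2]
  have key : mu n p (Fddot n ℓ) * (p / (1 - p)) ≤ (p / (1 - p)) ^ (ℓ+2) := by
    calc mu n p (Fddot n ℓ) * (p / (1 - p))
        = ∑ F ∈ Fddot n ℓ, (p ^ F.card * (1-p) ^ (n - F.card)) * (p / (1 - p)) := by
          rw [mu, Finset.sum_mul]
      _ = ∑ F ∈ Fddot n ℓ, p ^ (phi n ℓ F).card * (1-p) ^ (n - (phi n ℓ F).card) := by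
          refine Finset.sum_congr rfl fun F hF => ?_
          rw [phi_card hF]
          have hc := fddot_card_lt hF
          obtain ⟨k, hk⟩ : ∃ k, n - F.card = k + 1 := ⟨n - F.card - 1, by omega⟩
          rw [show n - (F.card + 1) = k from by omega, hk, pow_succ, pow_succ]
          field_simp
      _ = ∑ G ∈ (Fddot n ℓ).image (phi n ℓ), p ^ G.card * (1-p) ^ (n - G.card) :=
          (Finset.sum_image (f := fun G : Finset ℕ => p ^ G.card * (1-p) ^ (n - G.card)) hinj).symm
      _ ≤ mu n p (Fwalk n (ℓ+2)) := by
          rw [mu]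
          refine Finset.sum_le_sum_of_subset_of_nonneg ?_ (fun G _ _ =>
            mul_nonneg (pow_nonneg hp.le _) (pow_nonneg (by linarith) _))
          intro G hG
          obtain ⟨F, hF, rfl⟩ := Finset.mem_image.mp hG
          exact phi_mem_fwalk hF
      _ ≤ (p / (1 - p)) ^ (ℓ+2) := mu_fwalk_le hp hp' n (ℓ+2)
  have hpow : (p / (1 - p)) ^ (ℓ+2) = (p / (1 - p)) ^ (ℓ+1) * (p / (1 - p)) := by ring
  rw [hpow] at key
  exact le_of_mul_le_mul_right key hα0
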